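/- Let T be a rooted binary tree with N leaves, let A be a subset of {1,…,N} of size a, let m ≥ 1 be a natural number, and let the leaves of T be labeled by a uniformly random bijection from the leaf positions of T to {1,…,N}. Then the expected number of vertices of T whose descendant leaves number exactly m and all receive labels in A is at most choose(a,m)/choose(N−1,m−1). -/

import Mathlib

/-- A rooted binary tree: a leaf, or an internal node with two subtrees. -/
inductive RBT : Type
  | leaf : RBT
  | node : RBT → RBT → RBT

namespace RBT

/-- The number of leaves of a rooted binary tree. -/
def numLeaves : RBT → ℕ
  | leaf => 1
  | node l r => l.numLeaves + r.numLeaves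

/-- The paths (from the root) of all leaves of a rooted binary tree. -/
def leafPaths : RBT → List (List Bool)
  | leaf => [[]]
  | node l r => (l.leafPaths.map (false :: ·)) ++ (r.leafPaths.map (true :: ·))

/-- The paths (from the root) of all vertices of a rooted binary tree. -/
def vertexPaths : RBT → List (List Bool)
  | leaf => [[]]
  | node l r => [] :: ((l.vertexPaths.map (false :: ·)) ++ (r.vertexPaths.map (true :: ·)))

/-- The descendant leaves of the vertex of `t` at path `p`: all leaves of `t`
whose path extends `p`. -/
def descLeaves (t : RBT) (p : List Bool) : List (List Bool) :=
  t.leafPaths.filter (fun q => p.isPrefixOf q)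

/-- There are as many leaf paths as leaves. -/
theorem length_leafPaths : ∀ t : RBT, t.leafPaths.length = t.numLeaves
  | leaf => rfl
  | node l r => by
    simp [leafPaths, numLeaves, length_leafPaths l, length_leafPaths r]

end RBT

section Counting
variable {α : Type*} [Fintype α] [DecidableEq α]

lemma exists_perm_extend (S : Finset α) (f : {x // x ∈ S} ↪ α) :
    ∃ g : Equiv.Perm α, ∀ i : {x // x ∈ S}, g i = f i := by
  classical
  let e : {x // x ∈ S} ≃ {x // x ∈ Set.range f} :=
    Equiv.ofInjective f f.injective
  refine ⟨e.extendSubtype, fun i => ?_⟩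
  rw [Equiv.extendSubtype_apply_of_mem e i i.2]
  rfl

lemma card_fixing (S : Finset α) :
    Fintype.card {τ : Equiv.Perm α // ∀ i ∈ S, τ i = i} =
      (Fintype.card α - S.card).factorial := by
  classical
  have e1 : Equiv.Perm {x // ¬ x ∈ S} ≃ {τ : Equiv.Perm α // ∀ i ∈ S, τ i = i} :=
    (Equiv.Perm.subtypeEquivSubtypePerm (fun x => ¬ x ∈ S)).trans
      (Equiv.subtypeEquiv (Equiv.refl _) (by
        intro τ
        constructor
        · intro h i hi; exact h i (not_not.mpr hi)
        · intro h i hi; exact h i (not_not.mp hi)))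
  rw [← Fintype.card_congr e1, Fintype.card_perm, Fintype.card_subtype_compl,
    Fintype.card_coe]

lemma card_mapsTo (S B : Finset α) :
    Fintype.card {σ : Equiv.Perm α // ∀ i ∈ S, σ i ∈ B} =
      B.card.descFactorial S.card * (Fintype.card α - S.card).factorial := by
  classical
  choose G hG using fun f : ({x // x ∈ S} ↪ α) => exists_perm_extend S f
  let toB : {σ : Equiv.Perm α // ∀ i ∈ S, σ i ∈ B} → ({x // x ∈ S} ↪ {x // x ∈ B}) :=
    fun σ => ⟨fun i => ⟨σ.1 i, σ.2 i i.2⟩, by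
      intro i j hij
      apply Subtype.ext
      exact σ.1.injective (by simpa using congrArg Subtype.val hij)⟩
  let comp : ({x // x ∈ S} ↪ {x // x ∈ B}) → ({x // x ∈ S} ↪ α) :=
    fun f => f.trans (Function.Embedding.subtype _)
  let E : {σ : Equiv.Perm α // ∀ i ∈ S, σ i ∈ B} ≃
      ({x // x ∈ S} ↪ {x // x ∈ B}) × {τ : Equiv.Perm α // ∀ i ∈ S, τ i = i} :=
    { toFun := fun σ => ⟨toB σ, ⟨(G (comp (toB σ)))⁻¹ * σ.1, by
        intro i hi
        have h1 : G (comp (toB σ)) i = σ.1 i := hG (comp (toB σ)) ⟨i, hi⟩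
        simp [Equiv.Perm.mul_apply, ← h1]⟩⟩
      invFun := fun ft => ⟨G (comp ft.1) * ft.2.1, by
        intro i hi
        have h2 : ft.2.1 i = i := ft.2.2 i hi
        have h1 : G (comp ft.1) i = ft.1 ⟨i, hi⟩ := hG (comp ft.1) ⟨i, hi⟩
        simp [Equiv.Perm.mul_apply, h2, h1]⟩
      left_inv := fun σ => by
        apply Subtype.ext
        simp
      right_inv := fun ft => by
        have hres : toB ⟨G (comp ft.1) * ft.2.1, by
            intro i hi
            have h2 : ft.2.1 i = i := ft.2.2 i hi
            have h1 : G (comp ft.1) i = ft.1 ⟨i, hi⟩ := hG (comp ft.1) ⟨i, hi⟩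
            simp [Equiv.Perm.mul_apply, h2, h1]⟩ = ft.1 := by
          ext i
          have h2 : ft.2.1 i = i := ft.2.2 i i.2
          have h1 : G (comp ft.1) i = (ft.1 i : α) := hG (comp ft.1) i
          simp [toB, Equiv.Perm.mul_apply, h2, h1]
        ext : 1
        · exact hres
        · apply Subtype.ext
          simp only []
          rw [hres, inv_mul_cancel_left] }
  rw [Fintype.card_congr E, Fintype.card_prod, Fintype.card_embedding_eq,
    Fintype.card_coe, Fintype.card_coe, card_fixing]

end Counting

namespace RBT

lemma numLeaves_pos : ∀ t : RBT, 1 ≤ t.numLeaves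
  | leaf => le_refl _
  | node l r => by
    have := numLeaves_pos l; have := numLeaves_pos r
    simp only [numLeaves]; omega

lemma descLeaves_nil (t : RBT) : t.descLeaves [] = t.leafPaths := by
  simp [descLeaves, List.isPrefixOf]

lemma descLeaves_node_false (l r : RBT) (p : List Bool) :
    (node l r).descLeaves (false :: p) = (l.descLeaves p).map (false :: ·) := by
  simp [descLeaves, leafPaths, List.filter_append, List.filter_map,
    Function.comp_def, List.isPrefixOf]

lemma descLeaves_node_true (l r : RBT) (p : List Bool) :
    (node l r).descLeaves (true :: p) = (r.descLeaves p).map (true :: ·) := by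
  simp [descLeaves, leafPaths, List.filter_append, List.filter_map,
    Function.comp_def, List.isPrefixOf]

lemma length_descLeaves_le (t : RBT) (p : List Bool) :
    (t.descLeaves p).length ≤ t.numLeaves := by
  rw [← length_leafPaths]; exact List.length_filter_le _ _

lemma mul_countP_le (m : ℕ) (hm : 1 ≤ m) :
    ∀ t : RBT,
      m * (t.vertexPaths.countP (fun v => decide ((t.descLeaves v).length = m)))
        ≤ t.numLeaves
  | leaf => by
    have h1 : RBT.leaf.vertexPaths = [[]] := rfl
    have h2 : (RBT.leaf.descLeaves []).length = 1 := rfl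
    rw [h1, List.countP_cons, List.countP_nil, h2]
    rcases eq_or_ne m 1 with h | h
    · subst h; simp [numLeaves]
    · have hd : decide ((1 : ℕ) = m) = true ↔ False := by simp; omega
      simp [hd, numLeaves]
  | node l r => by
    have hl := mul_countP_le m hm l
    have hr := mul_countP_le m hm r
    have hcl : (List.countP (fun v => decide (((node l r).descLeaves v).length = m))
        (l.vertexPaths.map (false :: ·)))
        = List.countP (fun v => decide ((l.descLeaves v).length = m)) l.vertexPaths := by
      rw [List.countP_map]
      apply List.countP_congr
      intro v _
      simp [Function.comp_def, descLeaves_node_false]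
    have hcr : (List.countP (fun v => decide (((node l r).descLeaves v).length = m))
        (r.vertexPaths.map (true :: ·)))
        = List.countP (fun v => decide ((r.descLeaves v).length = m)) r.vertexPaths := by
      rw [List.countP_map]
      apply List.countP_congr
      intro v _
      simp [Function.comp_def, descLeaves_node_true]
    rw [vertexPaths, List.countP_cons, List.countP_append, hcl, hcr,
      descLeaves_nil, length_leafPaths]
    by_cases h : l.numLeaves + r.numLeaves = m
    · have hd : (node l r).numLeaves = m := by simp [numLeaves, h]
      have h1 : List.countP (fun v => decide ((l.descLeaves v).length = m)) l.vertexPaths = 0 := by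
        rw [List.countP_eq_zero]
        intro v _
        have := length_descLeaves_le l v
        have := numLeaves_pos r
        simp only [decide_eq_true_eq]
        omega
      have h2 : List.countP (fun v => decide ((r.descLeaves v).length = m)) r.vertexPaths = 0 := by
        rw [List.countP_eq_zero]
        intro v _
        have := length_descLeaves_le r v
        have := numLeaves_pos l
        simp only [decide_eq_true_eq]
        omega
      rw [if_pos (by simpa using hd), h1, h2]
      simp only [numLeaves]
      omega
    · have hd : ¬ (node l r).numLeaves = m := by simpa [numLeaves] using h
      rw [if_neg (by simpa using hd), add_zero, Nat.mul_add]
      simp only [numLeaves]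
      exact Nat.add_le_add hl hr

end RBT

section Sums

lemma sum_countP {ι β : Type*} [Fintype ι] [DecidableEq ι] (l : List β) (p : ι → β → Bool) :
    ∑ σ : ι, l.countP (p σ)
      = (l.map (fun v => (Finset.univ.filter (fun σ => p σ v = true)).card)).sum := by
  induction l with
  | nil => simp
  | cons b l ih =>
    simp only [List.countP_cons, List.map_cons, List.sum_cons, Finset.sum_add_distrib, ih]
    rw [add_comm]
    congr 1
    rw [Finset.card_filter]

lemma map_ite_sum {β : Type*} (l : List β) (q : β → Prop) [DecidablePred q] (c : ℕ) :
    (l.map (fun v => if q v then c else 0)).sum = c * l.countP (fun v => decide (q v)) := by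
  induction l with
  | nil => simp
  | cons b l ih =>
    by_cases h : q b <;> simp [List.countP_cons, h, ih] <;> ring

lemma card_filter_get {β : Type*} (l : List β) (p : β → Prop) [DecidablePred p] :
    (Finset.univ.filter (fun i : Fin l.length => p (l.get i))).card
      = l.countP (fun x => decide (p x)) := by
  induction l with
  | nil => simp
  | cons b l ih =>
    rw [List.countP_cons, ← ih, Finset.card_filter, Finset.card_filter]
    simp only [List.length_cons]
    rw [Fin.sum_univ_succ]
    by_cases h : p b <;> simp [h, add_comm]

end Sums

/-- Leaf positions of a tree with `N` leaves are indexed by `Fin T.leafPaths.length`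
(a set of size `N`), and a uniformly random labeling assigns to the leaf at index
`i` the label `(σ i : ℕ) + 1 ∈ {1, …, N}`, where `σ` is a uniformly random
permutation.  For any `A ⊆ {1, …, N}` of size `a` and any `m ≥ 1`, the expected
number of vertices of `T` whose descendant leaves number exactly `m` and all
receive labels in `A` is at most `choose(a, m) / choose(N-1, m-1)`. -/
theorem expected_monochromatic_vertices (T : RBT) (N : ℕ) (hN : T.numLeaves = N)
    (A : Finset ℕ) (hA : A ⊆ Finset.Icc 1 N) (a : ℕ) (ha : A.card = a)
    (m : ℕ) (hm : 1 ≤ m) :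
    (∑ σ : Equiv.Perm (Fin T.leafPaths.length),
        ((T.vertexPaths.countP (fun v =>
          decide ((T.descLeaves v).length = m ∧
            ∀ i : Fin T.leafPaths.length,
              T.leafPaths.get i ∈ T.descLeaves v → ((σ i : ℕ) + 1) ∈ A))) : ℝ)) /
        (Fintype.card (Equiv.Perm (Fin T.leafPaths.length)) : ℝ) ≤
      (a.choose m : ℝ) / ((N - 1).choose (m - 1) : ℝ) := by
  classical
  set n := T.leafPaths.length with hn
  have hnN : n = N := by rw [hn, RBT.length_leafPaths, hN]
  set B : Finset (Fin n) := Finset.univ.filter (fun j => ((j : ℕ) + 1) ∈ A) with hB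
  have hBcard : B.card = a := by
    rw [← ha]
    refine Finset.card_bij' (fun j _ => (j : ℕ) + 1)
      (fun x hx => (⟨x - 1, ?_⟩ : Fin n)) ?_ ?_ ?_ ?_
    · have := hA hx; rw [Finset.mem_Icc] at this
      have : n = N := hnN
      omega
    · intro j hj
      rw [hB, Finset.mem_filter] at hj
      exact hj.2
    · intro x hx
      have hx' := hA hx; rw [Finset.mem_Icc] at hx'
      rw [hB, Finset.mem_filter]
      refine ⟨Finset.mem_univ _, ?_⟩
      simpa [Nat.sub_add_cancel hx'.1] using hx
    · intro j hj
      apply Fin.ext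
      simp
    · intro x hx
      have hx' := hA hx; rw [Finset.mem_Icc] at hx'
      simp [Nat.sub_add_cancel hx'.1]
  have hSv : ∀ v, (Finset.univ.filter
      (fun i : Fin n => T.leafPaths.get i ∈ T.descLeaves v)).card
      = (T.descLeaves v).length := by
    intro v
    have h1 := card_filter_get T.leafPaths (fun x => x ∈ T.descLeaves v)
    have h2 : T.leafPaths.countP (fun x => decide (x ∈ T.descLeaves v))
        = (T.descLeaves v).length := by
      rw [List.countP_eq_length_filter]
      congr 1
      conv_rhs => rw [RBT.descLeaves]
      apply List.filter_congr
      intro x hx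
      simp [RBT.descLeaves, List.mem_filter, hx, ← List.isPrefixOf_iff_prefix]
    exact h1.trans h2
  set D := a.descFactorial m * (n - m).factorial with hD
  set k := T.vertexPaths.countP (fun v => decide ((T.descLeaves v).length = m)) with hkdef
  have key : ∀ v, (Finset.univ.filter (fun σ : Equiv.Perm (Fin n) =>
      (decide ((T.descLeaves v).length = m ∧
        ∀ i : Fin n, T.leafPaths.get i ∈ T.descLeaves v → ((σ i : ℕ) + 1) ∈ A)) = true)).card
      = if (T.descLeaves v).length = m then D else 0 := by
    intro v
    by_cases hv : (T.descLeaves v).length = m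
    · rw [if_pos hv]
      have hfc : (Finset.univ.filter (fun σ : Equiv.Perm (Fin n) =>
          (decide ((T.descLeaves v).length = m ∧
            ∀ i : Fin n, T.leafPaths.get i ∈ T.descLeaves v → ((σ i : ℕ) + 1) ∈ A)) = true))
          = (Finset.univ.filter (fun σ : Equiv.Perm (Fin n) =>
            ∀ i ∈ Finset.univ.filter
              (fun i : Fin n => T.leafPaths.get i ∈ T.descLeaves v), σ i ∈ B)) := by
        apply Finset.filter_congr
        intro σ _
        simp [hv, hB]
      rw [hfc, ← Fintype.card_subtype]
      have hmt := card_mapsTo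
        (Finset.univ.filter (fun i : Fin n => T.leafPaths.get i ∈ T.descLeaves v)) B
      rw [hBcard, hSv v, hv, Fintype.card_fin] at hmt
      rw [hD]
      convert hmt using 2
    · rw [if_neg hv, Finset.card_eq_zero, Finset.filter_eq_empty_iff]
      intro σ _
      simp [hv]
  have hnum : (∑ σ : Equiv.Perm (Fin n),
      (T.vertexPaths.countP (fun v =>
        decide ((T.descLeaves v).length = m ∧
          ∀ i : Fin n, T.leafPaths.get i ∈ T.descLeaves v → ((σ i : ℕ) + 1) ∈ A))))
      = D * k := by
    rw [sum_countP]
    rw [show (fun v => (Finset.univ.filter (fun σ : Equiv.Perm (Fin n) =>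
        (decide ((T.descLeaves v).length = m ∧
          ∀ i : Fin n, T.leafPaths.get i ∈ T.descLeaves v → ((σ i : ℕ) + 1) ∈ A)) = true)).card)
        = (fun v => if (T.descLeaves v).length = m then D else 0) from funext key]
    rw [map_ite_sum]
  have hk : m * k ≤ n := by
    rw [hn, RBT.length_leafPaths]
    exact RBT.mul_countP_le m hm T
  rw [show (∑ σ : Equiv.Perm (Fin n),
      ((T.vertexPaths.countP (fun v =>
        decide ((T.descLeaves v).length = m ∧
          ∀ i : Fin n, T.leafPaths.get i ∈ T.descLeaves v → ((σ i : ℕ) + 1) ∈ A))) : ℝ))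
      = ((D * k : ℕ) : ℝ) by rw [← hnum]; push_cast; rfl]
  rw [Fintype.card_perm, Fintype.card_fin, ← hnN]
  rcases Nat.eq_zero_or_pos k with hk0 | hkpos
  · rw [hk0]
    simp only [Nat.mul_zero, Nat.cast_zero, zero_div]
    positivity
  · have hmn : m ≤ n := le_trans (Nat.le_mul_of_pos_right m hkpos) hk
    have hn1 : 1 ≤ n := le_trans hm hmn
    have hcpos : 0 < (n - 1).choose (m - 1) := Nat.choose_pos (by omega)
    rw [div_le_div_iff₀ (by positivity) (by exact_mod_cast hcpos)]
    have h2 : (n - 1).choose (m - 1) * (m - 1).factorial * (n - m).factorial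
        = (n - 1).factorial := by
      have := Nat.choose_mul_factorial_mul_factorial (show m - 1 ≤ n - 1 by omega)
      rwa [show n - 1 - (m - 1) = n - m from by omega] at this
    have hc : ((n - 1).choose (m - 1) : ℝ) * (((m - 1).factorial : ℝ) * ((n - m).factorial : ℝ))
        = ((n - 1).factorial : ℝ) := by
      rw [← mul_assoc]
      exact_mod_cast congrArg (Nat.cast : ℕ → ℝ) h2
    have hDR : (D : ℝ) = (m.factorial : ℝ) * (a.choose m : ℝ) * ((n - m).factorial : ℝ) := by
      rw [hD, Nat.descFactorial_eq_factorial_mul_choose]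
      push_cast
      ring
    have hmf : (m.factorial : ℝ) = (m : ℝ) * ((m - 1).factorial : ℝ) := by
      exact_mod_cast (Nat.mul_factorial_pred (by omega)).symm
    have hnf : (n.factorial : ℝ) = (n : ℝ) * ((n - 1).factorial : ℝ) := by
      exact_mod_cast (Nat.mul_factorial_pred (by omega)).symm
    have hkR : (m : ℝ) * (k : ℝ) ≤ (n : ℝ) := by exact_mod_cast hk
    have key2 : ((D * k : ℕ) : ℝ) * ((n - 1).choose (m - 1) : ℝ)
        = (a.choose m : ℝ) * ((n - 1).factorial : ℝ) * ((m : ℝ) * (k : ℝ)) := by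
      push_cast
      rw [hDR, hmf, ← hc]
      ring
    rw [key2, hnf]
    calc (a.choose m : ℝ) * ((n - 1).factorial : ℝ) * ((m : ℝ) * (k : ℝ))
        ≤ (a.choose m : ℝ) * ((n - 1).factorial : ℝ) * (n : ℝ) :=
          mul_le_mul_of_nonneg_left hkR (by positivity)
      _ = (a.choose m : ℝ) * ((n : ℝ) * ((n - 1).factorial : ℝ)) := by ring
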